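/- Let 𝔏 be a subspace lattice in a Banach space X and let e ∈ X. A rank-one operator e⊗η belongs to Alg(𝔏) if and only if η annihilates [Alg(𝔏)e]₋, where [Alg(𝔏)e] is the cyclic subspace generated by e and N₋ = ⋁{K ∈ Lat(Alg(𝔏)) : N ⊄ K}. -/

import Mathlib

open ContinuousLinearMap

/-- The closed linear span (join) of a family of subspaces. -/
noncomputable def cJoin {X : Type*} [NormedAddCommGroup X] [NormedSpace ℂ X]
    (S : Set (Submodule ℂ X)) : Submodule ℂ X :=
  (sSup S).topologicalClosure

/-- Join of two subspaces in the lattice of closed subspaces. -/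
noncomputable def cJoin2 {X : Type*} [NormedAddCommGroup X] [NormedSpace ℂ X]
    (M N : Submodule ℂ X) : Submodule ℂ X :=
  (M ⊔ N).topologicalClosure

/-- A subspace lattice: a complete lattice of closed subspaces containing the trivial ones. -/
def IsSubspaceLattice {X : Type*} [NormedAddCommGroup X] [NormedSpace ℂ X]
    (L : Set (Submodule ℂ X)) : Prop :=
  (∀ M ∈ L, IsClosed (M : Set X)) ∧ ⊥ ∈ L ∧ ⊤ ∈ L ∧
    ∀ S ⊆ L, cJoin S ∈ L ∧ sInf S ∈ L

/-- Alg(F): bounded operators leaving every member of F invariant. -/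
def algOf {X : Type*} [NormedAddCommGroup X] [NormedSpace ℂ X]
    (L : Set (Submodule ℂ X)) : Set (X →L[ℂ] X) :=
  {A | ∀ M ∈ L, ∀ x ∈ M, A x ∈ M}

/-- Lat(T): closed subspaces invariant under every operator in T. -/
def latOf {X : Type*} [NormedAddCommGroup X] [NormedSpace ℂ X]
    (T : Set (X →L[ℂ] X)) : Set (Submodule ℂ X) :=
  {M | IsClosed (M : Set X) ∧ ∀ A ∈ T, ∀ x ∈ M, A x ∈ M}

/-- The rank-one operator e ⊗ η : x ↦ η(x) • e. -/
noncomputable def rankOne {X : Type*} [NormedAddCommGroup X] [NormedSpace ℂ X]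
    (e : X) (η : X →L[ℂ] ℂ) : X →L[ℂ] X :=
  η.smulRight e

/-- The rank-one operators in a set of operators. -/
noncomputable def Rk1 {X : Type*} [NormedAddCommGroup X] [NormedSpace ℂ X]
    (T : Set (X →L[ℂ] X)) : Set (X →L[ℂ] X) :=
  {A ∈ T | ∃ (e : X) (η : X →L[ℂ] ℂ), e ≠ 0 ∧ η ≠ 0 ∧ A = rankOne e η}

/-- M₋ = ⋁{K ∈ L : M ⊄ K}. -/
noncomputable def mMinus {X : Type*} [NormedAddCommGroup X] [NormedSpace ℂ X]
    (L : Set (Submodule ℂ X)) (M : Submodule ℂ X) : Submodule ℂ X :=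
  cJoin {K | K ∈ L ∧ ¬ M ≤ K}

/-- M₊ = ⋀{K ∈ L : K ⊄ M}. -/
noncomputable def mPlus {X : Type*} [NormedAddCommGroup X] [NormedSpace ℂ X]
    (L : Set (Submodule ℂ X)) (M : Submodule ℂ X) : Submodule ℂ X :=
  sInf {K | K ∈ L ∧ ¬ K ≤ M}

/-- N_* = ⋀{M₋ : M ∈ L, M ⊄ N}. -/
noncomputable def nStar {X : Type*} [NormedAddCommGroup X] [NormedSpace ℂ X]
    (L : Set (Submodule ℂ X)) (N : Submodule ℂ X) : Submodule ℂ X :=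
  sInf {P | ∃ M, M ∈ L ∧ ¬ M ≤ N ∧ P = mMinus L M}

/-- The cyclic subspace [Alg(L)x]: closed linear span of the orbit of x under Alg(L). -/
noncomputable def cyclicSubspace {X : Type*} [NormedAddCommGroup X] [NormedSpace ℂ X]
    (L : Set (Submodule ℂ X)) (x : X) : Submodule ℂ X :=
  (Submodule.span ℂ ((fun A : X →L[ℂ] X => A x) '' algOf L)).topologicalClosure

/-- The pinch points of a family of subspaces. -/
def pinOf {X : Type*} [NormedAddCommGroup X] [NormedSpace ℂ X]
    (L : Set (Submodule ℂ X)) : Set (Submodule ℂ X) :=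
  {P | P ∈ L ∧ ∀ M ∈ L, M ≤ P ∨ P ≤ M}


/-- A rank-one operator e⊗η belongs to Alg(𝔏) iff η annihilates [Alg(𝔏)e]₋,
where the minus operation is computed in Lat(Alg(𝔏)). -/
theorem rankOne_mem_alg_iff_annihilates_cyclic_minus
    {X : Type*} [NormedAddCommGroup X] [NormedSpace ℂ X] [CompleteSpace X]
    (L : Set (Submodule ℂ X)) (hL : IsSubspaceLattice L)
    (e : X) (η : X →L[ℂ] ℂ) (he : e ≠ 0) (hη : η ≠ 0) :
    rankOne e η ∈ algOf L ↔
      ∀ x ∈ mMinus (latOf (algOf L)) (cyclicSubspace L e), η x = 0 := by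
  set E := cyclicSubspace L e with hE
  have he_mem : e ∈ E := by
    apply Submodule.le_topologicalClosure
    apply Submodule.subset_span
    exact ⟨ContinuousLinearMap.id ℂ X, fun M _ x hx => hx, rfl⟩
  constructor
  · intro halg x hx
    -- η vanishes on each K in the set, hence on the closure of the sup
    have key : cJoin {K | K ∈ latOf (algOf L) ∧ ¬ E ≤ K} ≤ LinearMap.ker (η : X →ₗ[ℂ] ℂ) := by
      apply Submodule.topologicalClosure_minimal
      · apply sSup_le
        rintro K ⟨hK, hKE⟩ y hy
        -- if η y ≠ 0 then e ∈ K, hence E ≤ K, contradiction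
        by_contra hne
        have hηy : η y ≠ 0 := hne
        have heK : e ∈ K := by
          have := hK.2 _ halg y hy
          rw [rankOne, ContinuousLinearMap.smulRight_apply] at this
          have := K.smul_mem (η y)⁻¹ this
          rwa [smul_smul, inv_mul_cancel₀ hηy, one_smul] at this
        apply hKE
        apply Submodule.topologicalClosure_minimal
        · rw [Submodule.span_le]
          rintro _ ⟨A, hA, rfl⟩
          exact hK.2 A hA e heK
        · exact hK.1
      · exact isClosed_ker η
    exact key hx
  · intro hann M hM x hx
    have rankOne_apply : rankOne e η x = η x • e := by
      rw [rankOne, ContinuousLinearMap.smulRight_apply]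
    rw [rankOne_apply]
    by_cases hEM : E ≤ M
    · exact M.smul_mem _ (hEM he_mem)
    · have hMlat : M ∈ latOf (algOf L) := ⟨hL.1 M hM, fun A hA => hA M hM⟩
      have hxm : x ∈ mMinus (latOf (algOf L)) E := by
        apply Submodule.le_topologicalClosure
        exact le_sSup (show M ∈ {K | K ∈ latOf (algOf L) ∧ ¬ E ≤ K} from ⟨hMlat, hEM⟩) hx
      rw [hann x hxm, zero_smul]
      exact M.zero_mem
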